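/- Let N ≥ 1 be an integer, let γ > 0, α > 0, ḡ, σ, a, b be real numbers, and let g_1,…,g_N be square-integrable real random variables on a probability space with E[g_i] = ḡ for all i, E[(g_i − ḡ)²] = 1 for all i, and E[(g_i − ḡ)(g_j − ḡ)] = σ for all i ≠ j. Let ω be an integrable real random variable with E[ω] = 0 that is independent of the random vector (g_1,…,g_N). Define s_i = a·(g_i − ḡ) + b·ḡ, L = Σ_{i=1}^N s_i, and the aggregate utility U = Σ_{i=1}^N ( −s_i·(γ/N)·(L + ω) + g_i·s_i − α·s_i² ). Then E[U]/N = ( b − (γ+α)·b² )·ḡ² − ( ((N−1)/N)·γ·σ + γ/N + α )·a² + a. -/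

import Mathlib

open MeasureTheory ProbabilityTheory

lemma my_int_mul {Ω : Type*} [MeasurableSpace Ω] {μ : Measure Ω} [IsProbabilityMeasure μ]
    {f h : Ω → ℝ} (hf : MemLp f 2 μ) (hh : MemLp h 2 μ) :
    Integrable (fun x => f x * h x) μ := by
  have := hh.smul (φ := f) hf (r := 1)
    (hpqr := ⟨by rw [ENNReal.inv_two_add_inv_two, inv_one]⟩)
  simpa [smul_eq_mul, Pi.mul_def] using (memLp_one_iff_integrable.mp this)

theorem stmt_13 {Ω : Type*} [MeasurableSpace Ω] (μ : Measure Ω) [IsProbabilityMeasure μ]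
    (N : ℕ) (hN : 1 ≤ N) (γ α gbar σ a b : ℝ) (hγ : 0 < γ) (hα : 0 < α)
    (g : Fin N → Ω → ℝ)
    (hL2 : ∀ i, MemLp (g i) 2 μ)
    (hmean : ∀ i, (∫ x, g i x ∂μ) = gbar)
    (hvar : ∀ i, (∫ x, (g i x - gbar) ^ 2 ∂μ) = 1)
    (hcov : ∀ i j, i ≠ j → (∫ x, (g i x - gbar) * (g j x - gbar) ∂μ) = σ)
    (ω : Ω → ℝ) (hωint : Integrable ω μ) (hωmean : (∫ x, ω x ∂μ) = 0)
    (hindep : IndepFun ω (fun x (i : Fin N) => g i x) μ)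
    (s : Fin N → Ω → ℝ)
    (hs : ∀ i x, s i x = a * (g i x - gbar) + b * gbar)
    (L : Ω → ℝ) (hL : ∀ x, L x = ∑ i, s i x)
    (U : Ω → ℝ)
    (hU : ∀ x, U x = ∑ i,
      (-(s i x) * (γ / N) * (L x + ω x) + g i x * s i x - α * s i x ^ 2)) :
    (∫ x, U x ∂μ) / N
      = (b - (γ + α) * b ^ 2) * gbar ^ 2
        - ((((N : ℝ) - 1) / N) * γ * σ + γ / N + α) * a ^ 2 + a := by
  have hN0 : (N : ℝ) ≠ 0 := Nat.cast_ne_zero.mpr (by omega)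
  -- centered variables
  have hh2 : ∀ i, MemLp (fun x => g i x - gbar) 2 μ :=
    fun i => (hL2 i).sub (memLp_const gbar)
  have hhint : ∀ i, Integrable (fun x => g i x - gbar) μ :=
    fun i => (hh2 i).integrable one_le_two
  have hhmean : ∀ i, (∫ x, (g i x - gbar) ∂μ) = 0 := by
    intro i
    rw [integral_sub ((hL2 i).integrable one_le_two) (integrable_const _), hmean,
      integral_const]
    simp
  set S1 : Ω → ℝ := fun x => ∑ i, (g i x - gbar) with hS1
  set S2 : Ω → ℝ := fun x => ∑ i, (g i x - gbar) ^ 2 with hS2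
  have hS1L2 : MemLp S1 2 μ := by
    have := memLp_finset_sum' Finset.univ (fun (i : Fin N) (_ : i ∈ Finset.univ) => hh2 i)
    have heq : (∑ i : Fin N, fun x => g i x - gbar) = S1 := by
      funext x; rw [Finset.sum_apply]
    rwa [heq] at this
  have hS1int : Integrable S1 μ := integrable_finset_sum _ (fun i _ => hhint i)
  have hS1mean : (∫ x, S1 x ∂μ) = 0 := by
    rw [hS1, integral_finset_sum _ (fun i _ => hhint i)]
    simp [hhmean]
  have hS2int : Integrable S2 μ := by
    refine integrable_finset_sum _ (fun i _ => ?_)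
    have := my_int_mul (hh2 i) (hh2 i)
    simpa [sq] using this
  have hS2mean : (∫ x, S2 x ∂μ) = N := by
    rw [hS2, integral_finset_sum _ (fun i _ => by
      have := my_int_mul (hh2 i) (hh2 i); simpa [sq] using this)]
    simp [hvar]
  have hS1sqint : Integrable (fun x => S1 x ^ 2) μ := by
    have := my_int_mul hS1L2 hS1L2
    simpa [sq] using this
  have hS1sq : (∫ x, S1 x ^ 2 ∂μ) = N + N * ((N : ℝ) - 1) * σ := by
    have hexp : ∀ x, S1 x ^ 2 = ∑ i, ∑ j, (g i x - gbar) * (g j x - gbar) := by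
      intro x
      rw [hS1, sq, Finset.sum_mul_sum]
    simp only [hexp]
    rw [integral_finset_sum _ (fun i _ =>
      integrable_finset_sum _ (fun j _ => my_int_mul (hh2 i) (hh2 j)))]
    have : ∀ i : Fin N, (∫ x, ∑ j, (g i x - gbar) * (g j x - gbar) ∂μ)
        = 1 + ((N : ℝ) - 1) * σ := by
      intro i
      rw [integral_finset_sum _ (fun j _ => my_int_mul (hh2 i) (hh2 j))]
      rw [← Finset.add_sum_erase _ _ (Finset.mem_univ i)]
      have h1 : (∫ x, (g i x - gbar) * (g i x - gbar) ∂μ) = 1 := by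
        have := hvar i; rw [← this]; congr 1; ext x; ring
      rw [h1]
      have h2 : ∀ j ∈ Finset.univ.erase i,
          (∫ x, (g i x - gbar) * (g j x - gbar) ∂μ) = σ := by
        intro j hj
        exact hcov i j (Ne.symm (Finset.mem_erase.mp hj).1)
      rw [Finset.sum_congr rfl h2, Finset.sum_const, Finset.card_erase_of_mem (Finset.mem_univ i),
        Finset.card_univ, Fintype.card_fin, nsmul_eq_mul, Nat.cast_sub hN, Nat.cast_one]
    rw [Finset.sum_congr rfl (fun i _ => this i), Finset.sum_const, Finset.card_univ,
      Fintype.card_fin, nsmul_eq_mul]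
    ring
  -- independence of ω and S1
  have hindepS1 : IndepFun ω S1 μ := by
    have hφ : Measurable (fun v : Fin N → ℝ => ∑ i, (v i - gbar)) := by
      apply Finset.measurable_sum
      intro i _
      exact (measurable_pi_apply i).sub measurable_const
    have := hindep.comp measurable_id hφ
    exact this
  have hωS1int : Integrable (fun x => ω x * S1 x) μ := by
    have := hindepS1.integrable_mul hωint hS1int
    simpa [Pi.mul_def] using this
  have hωS1mean : (∫ x, ω x * S1 x ∂μ) = 0 := by
    have := hindepS1.integral_mul_eq_mul_integral hωint.aestronglyMeasurable hS1int.aestronglyMeasurable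
    simp only [Pi.mul_def] at this ⊢
    rw [this, hωmean, zero_mul]
  -- pointwise identity
  set A : ℝ := a - α * a ^ 2 with hA
  set C2 : ℝ := -(γ * a ^ 2 / N) with hC2
  set C4 : ℝ := -(γ * a / N) with hC4
  set D : ℝ := (a + b) * gbar - 2 * (γ + α) * a * b * gbar with hD
  set E : ℝ := -(γ * b * gbar) with hE
  set F : ℝ := N * ((b - (γ + α) * b ^ 2) * gbar ^ 2) with hF
  have key : ∀ x, U x = A * S2 x + C2 * S1 x ^ 2 + C4 * (ω x * S1 x)
      + D * S1 x + E * ω x + F := by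
    intro x
    simp only [hS1, hS2]
    have hLx : L x = a * (∑ i, (g i x - gbar)) + N * (b * gbar) := by
      rw [hL]
      simp only [hs]
      rw [Finset.sum_add_distrib, ← Finset.mul_sum, Finset.sum_const, Finset.card_univ,
        Fintype.card_fin, nsmul_eq_mul]
    rw [hU]
    have expand : ∀ i ∈ Finset.univ,
        (-(s i x) * (γ / N) * (L x + ω x) + g i x * s i x - α * s i x ^ 2)
        = A * (g i x - gbar) ^ 2
          + (C2 * (∑ k, (g k x - gbar)) + C4 * ω x + (-(γ * a * b * gbar) + (a + b) * gbar
              - 2 * α * a * b * gbar)) * (g i x - gbar)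
          + (-(γ / N) * (b * gbar) * (a * (∑ k, (g k x - gbar)) + N * (b * gbar) + ω x)
              + b * gbar ^ 2 - α * (b * gbar) ^ 2) := by
      intro i _
      rw [hs, hLx, hA, hC2, hC4]
      field_simp
      ring
    rw [Finset.sum_congr rfl expand, Finset.sum_add_distrib, Finset.sum_add_distrib,
      ← Finset.mul_sum, ← Finset.mul_sum, Finset.sum_const, Finset.card_univ,
      Fintype.card_fin, nsmul_eq_mul]
    rw [hA, hC2, hC4, hD, hE, hF]
    field_simp
    ring
  have hint1 : Integrable (fun x => A * S2 x) μ := hS2int.const_mul _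
  have hint2 : Integrable (fun x => C2 * S1 x ^ 2) μ := hS1sqint.const_mul _
  have hint3 : Integrable (fun x => C4 * (ω x * S1 x)) μ := hωS1int.const_mul _
  have hint4 : Integrable (fun x => D * S1 x) μ := hS1int.const_mul _
  have hint5 : Integrable (fun x => E * ω x) μ := hωint.const_mul _
  have hint12 : Integrable (fun x => A * S2 x + C2 * S1 x ^ 2) μ := hint1.add hint2
  have hint123 : Integrable (fun x => A * S2 x + C2 * S1 x ^ 2 + C4 * (ω x * S1 x)) μ :=
    hint12.add hint3
  have hint1234 : Integrable
      (fun x => A * S2 x + C2 * S1 x ^ 2 + C4 * (ω x * S1 x) + D * S1 x) μ :=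
    hint123.add hint4
  have hint12345 : Integrable
      (fun x => A * S2 x + C2 * S1 x ^ 2 + C4 * (ω x * S1 x) + D * S1 x + E * ω x) μ :=
    hint1234.add hint5
  have hUint : (∫ x, U x ∂μ)
      = A * N + C2 * (N + N * ((N : ℝ) - 1) * σ) + C4 * 0 + D * 0 + E * 0 + F := by
    simp only [key]
    rw [integral_add hint12345 (integrable_const F),
      integral_add hint1234 hint5,
      integral_add hint123 hint4,
      integral_add hint12 hint3,
      integral_add hint1 hint2,
      integral_const_mul, integral_const_mul, integral_const_mul, integral_const_mul,
      integral_const_mul, integral_const]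
    rw [hS2mean, hS1sq, hωS1mean, hS1mean, hωmean]
    simp
  rw [hUint, hA, hC2, hC4, hE, hF]
  field_simp
  ring
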